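/- arXiv:2102.06409 — 7 statements merged into one kernel-verified Lean document; each statement's English description precedes it below -/
import Mathlib

section
/- For an element a and an idempotent e of a monoid M, we have a R* e if and only if ea = a and for all x, y ∈ M, xa = ya implies xe = ye. -/
theorem rstar_idempotent_characterization (M : Type*) [Monoid M] (a e : M)
    (he : e * e = e) :
    (∀ x y : M, x * a = y * a ↔ x * e = y * e) ↔
    (e * a = a ∧ ∀ x y : M, x * a = y * a → x * e = y * e) := by
  constructor
  · intro h
    refine ⟨?_, fun x y hxy => (h x y).mp hxy⟩
    have := (h e 1).mpr (by simpa using he)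
    simpa using this
  · rintro ⟨hea, h⟩ x y
    refine ⟨h x y, fun hxy => ?_⟩
    calc x * a = x * e * a := by rw [mul_assoc, hea]
    _ = y * e * a := by rw [hxy]
    _ = y * a := by rw [mul_assoc, hea]
end

section
/- For an element a and an idempotent e of a monoid M, we have a R̃ e if and only if ea = a and for every idempotent f ∈ M, fa = a implies fe = e. -/
theorem rtilde_idempotent_characterization (M : Type*) [Monoid M] (a e : M)
    (he : e * e = e) :
    (∀ f : M, f * f = f → (f * a = a ↔ f * e = e)) ↔
    (e * a = a ∧ ∀ f : M, f * f = f → f * a = a → f * e = e) := by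
  constructor
  · intro h
    exact ⟨(h e he).mpr he, fun f hf hfa => (h f hf).mp hfa⟩
  · rintro ⟨hea, h⟩ f hf
    refine ⟨h f hf, fun hfe => ?_⟩
    calc f * a = f * (e * a) := by rw [hea]
      _ = (f * e) * a := by rw [mul_assoc]
      _ = e * a := by rw [hfe]
      _ = a := hea
end

section
/- If M is a left abundant monoid then the relations R* and R̃ coincide on M. -/
theorem left_abundant_rstar_eq_rtilde (M : Type*) [Monoid M]
    (hla : ∀ a : M, ∃ e : M, e * e = e ∧ (∀ x y : M, x * a = y * a ↔ x * e = y * e)) :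
    ∀ a b : M,
      (∀ x y : M, x * a = y * a ↔ x * b = y * b) ↔
      (∀ e : M, e * e = e → (e * a = a ↔ e * b = b)) := by
  intro a b
  constructor
  · intro h e _
    constructor
    · intro hea
      have := (h e 1).mp (by simpa using hea)
      simpa using this
    · intro heb
      have := (h e 1).mpr (by simpa using heb)
      simpa using this
  · intro h
    obtain ⟨e, he, hre⟩ := hla a
    obtain ⟨f, hf, hrf⟩ := hla b
    have hea : e * a = a := by
      have := (hre e 1).mpr (by simpa using he)
      simpa using this
    have hfb : f * b = b := by
      have := (hrf f 1).mpr (by simpa using hf)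
      simpa using this
    have heb : e * b = b := (h e he).mp hea
    have hfa : f * a = a := (h f hf).mpr hfb
    intro x y
    constructor
    · intro hxy
      have hxe : x * e = y * e := (hre x y).mp hxy
      calc x * b = x * (e * b) := by rw [heb]
        _ = x * e * b := by rw [mul_assoc]
        _ = y * e * b := by rw [hxe]
        _ = y * (e * b) := by rw [mul_assoc]
        _ = y * b := by rw [heb]
    · intro hxy
      have hxf : x * f = y * f := (hrf x y).mp hxy
      calc x * a = x * (f * a) := by rw [hfa]
        _ = x * f * a := by rw [mul_assoc]
        _ = y * f * a := by rw [hxf]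
        _ = y * (f * a) := by rw [mul_assoc]
        _ = y * a := by rw [hfa]
end

section
/- The restricted direct product (direct sum) Σ_{α∈V} M_α of a family of left abundant monoids {M_α : α ∈ V} is left abundant, where Σ_{α∈V} M_α consists of those elements of the full direct product Π_{α∈V} M_α having all but finitely many coordinates equal to the identity. -/
/-- The restricted direct product (direct sum) of a family of monoids:
the submonoid of the full direct product consisting of the finitely
supported functions. -/
def restrictedDirectProduct (V : Type*) (M : V → Type*) [∀ α, Monoid (M α)] :
    Submonoid (∀ α, M α) where
  carrier := {f | {α | f α ≠ 1}.Finite}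
  one_mem' := by simp
  mul_mem' := by
    intro f g hf hg
    refine (hf.union hg).subset fun α hα => ?_
    by_contra hc
    simp only [Set.mem_union, Set.mem_setOf_eq, not_or, ne_eq, not_not] at hc
    simp only [Set.mem_setOf_eq, Pi.mul_apply, hc.1, hc.2, one_mul,
      ne_eq, not_true_eq_false] at hα

theorem restricted_direct_product_left_abundant (V : Type*) (M : V → Type*)
    [∀ α, Monoid (M α)]
    (hla : ∀ α, ∀ a : M α, ∃ e : M α, e * e = e ∧
      (∀ x y : M α, x * a = y * a ↔ x * e = y * e)) :
    ∀ a : restrictedDirectProduct V M, ∃ e : restrictedDirectProduct V M,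
      e * e = e ∧ (∀ x y : restrictedDirectProduct V M,
        x * a = y * a ↔ x * e = y * e) := by
  classical
  intro a
  choose E hE1 hE2 using fun α => hla α (a.1 α)
  set e : ∀ α, M α := fun α => if a.1 α = 1 then 1 else E α with he
  have hmem : e ∈ restrictedDirectProduct V M := by
    refine a.2.subset fun α hα => ?_
    simp only [Set.mem_setOf_eq, he] at hα ⊢
    intro h
    exact hα (by simp [h])
  have hcomp : ∀ α (x y : M α), x * a.1 α = y * a.1 α ↔ x * e α = y * e α := by
    intro α x y
    by_cases h : a.1 α = 1
    · simp [he, h]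
    · simp only [he, if_neg h]
      exact hE2 α x y
  refine ⟨⟨e, hmem⟩, ?_, ?_⟩
  · ext α
    simp only [Submonoid.coe_mul, Pi.mul_apply, he]
    by_cases h : a.1 α = 1
    · simp [h]
    · simp [if_neg h, hE1 α]
  · intro x y
    simp only [Subtype.ext_iff, Submonoid.coe_mul, funext_iff, Pi.mul_apply]
    exact forall_congr' fun α => hcomp α (x.1 α) (y.1 α)
end

section
/- Let M be a monoid, a ∈ M with a left inverse a' (a'a = 1), and e an idempotent of M with x R* e for some x ∈ M. Then a x R* a e a', where R* is the standard relation. In particular, if M is left abundant and x R* e with e idempotent, then ax is R*-related to the idempotent aea'. -/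
theorem rstar_left_mult_and_conjugate (M : Type*) [Monoid M]
    (a a' x e : M) (ha : a' * a = 1) (he : e * e = e)
    (hxe : ∀ u v : M, u * x = v * x ↔ u * e = v * e) :
    ∀ u v : M, u * (a * x) = v * (a * x) ↔
      u * (a * e * a') = v * (a * e * a') := by
  intro u v
  constructor
  · intro h
    have h1 : u * a * e = v * a * e := (hxe (u * a) (v * a)).mp (by
      rw [mul_assoc, mul_assoc]; exact h)
    calc u * (a * e * a') = u * a * e * a' := by rw [← mul_assoc, ← mul_assoc]
      _ = v * a * e * a' := by rw [h1]
      _ = v * (a * e * a') := by rw [← mul_assoc, ← mul_assoc]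
  · intro h
    have h1 : u * a * e = v * a * e := by
      have h2 : u * (a * e * a') * a = v * (a * e * a') * a := by rw [h]
      simpa [mul_assoc, ha] using h2
    have h3 : u * a * x = v * a * x := (hxe (u * a) (v * a)).mpr h1
    simpa [mul_assoc] using h3
end

section
/- Let M, N be monoids each containing an element with no left inverse and no right inverse. Then the free product M * N is not regular: the element represented by m ∘ n, for m ∈ M and n ∈ N without one-sided inverses, is not regular in M * N. -/
namespace FPNR

variable {M N : Type*} [Monoid M] [Monoid N]

/-- Alternating lists of letters. -/
def Alt (l : List (M ⊕ N)) : Prop := l.Chain' fun u v => u.isLeft ≠ v.isLeft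

/-- No letter is an identity. -/
def NoOne (l : List (M ⊕ N)) : Prop :=
  ∀ u ∈ l, u ≠ Sum.inl 1 ∧ u ≠ Sum.inr 1

open Classical in
/-- Action of `M` on words, by merging into the head. -/
noncomputable def mact (a : M) : List (M ⊕ N) → List (M ⊕ N)
  | .inl x :: t => if a * x = 1 then t else .inl (a * x) :: t
  | l => if a = 1 then l else .inl a :: l

open Classical in
/-- Action of `N` on words, by merging into the head. -/
noncomputable def nact (b : N) : List (M ⊕ N) → List (M ⊕ N)
  | .inr y :: t => if b * y = 1 then t else .inr (b * y) :: t
  | l => if b = 1 then l else .inr b :: l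

theorem mact_one (l : List (M ⊕ N)) (h : NoOne l) : mact 1 l = l := by
  cases l with
  | nil => simp [mact]
  | cons u t =>
    cases u with
    | inl x =>
      have hx : x ≠ 1 := by
        intro hx1; exact (h _ (List.mem_cons_self)).1 (by rw [hx1])
      simp [mact, hx]
    | inr y => simp [mact]

theorem nact_one (l : List (M ⊕ N)) (h : NoOne l) : nact 1 l = l := by
  cases l with
  | nil => simp [nact]
  | cons u t =>
    cases u with
    | inr y =>
      have hy : y ≠ 1 := by
        intro hy1; exact (h _ (List.mem_cons_self)).2 (by rw [hy1])
      simp [nact, hy]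
    | inl x => simp [nact]

theorem mact_mul (a b : M) (l : List (M ⊕ N)) (hl : Alt l) :
    mact (a * b) l = mact a (mact b l) := by
  classical
  cases l with
  | nil =>
    by_cases hb : b = 1
    · subst hb; rw [mul_one]; simp [mact]
    · by_cases hab : a * b = 1 <;> simp [mact, hb, hab]
  | cons u t =>
    cases u with
    | inl x =>
      have ht : ∀ x' t', t = Sum.inl x' :: t' → False := by
        intro x' t' htt
        rw [Alt, htt, List.Chain', List.isChain_cons_cons] at hl
        simp at hl
      by_cases hbx : b * x = 1
      · have h1 : mact b (Sum.inl x :: t) = t := by simp [mact, hbx]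
        rw [h1]
        have h2 : mact (a * b) (Sum.inl x :: t) =
            if a = 1 then t else Sum.inl a :: t := by
          simp [mact, mul_assoc, hbx]
        rw [h2]
        cases t with
        | nil => simp [mact]
        | cons v t' =>
          cases v with
          | inl x' => exact absurd rfl (fun h => ht x' t' h)
          | inr y' => simp [mact]
      · have h1 : mact b (Sum.inl x :: t) = Sum.inl (b * x) :: t := by
          simp [mact, hbx]
        rw [h1]
        by_cases habx : a * (b * x) = 1 <;>
          simp [mact, mul_assoc, hbx, habx]
    | inr y =>
      by_cases hb : b = 1
      · subst hb; rw [mul_one]; simp [mact]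
      · have h1 : mact b (Sum.inr y :: t) = Sum.inl b :: Sum.inr y :: t := by
          simp [mact, hb]
        rw [h1]
        by_cases hab : a * b = 1 <;> simp [mact, hb, hab]

theorem nact_mul (a b : N) (l : List (M ⊕ N)) (hl : Alt l) :
    nact (a * b) l = nact a (nact b l) := by
  classical
  cases l with
  | nil =>
    by_cases hb : b = 1
    · subst hb; rw [mul_one]; simp [nact]
    · by_cases hab : a * b = 1 <;> simp [nact, hb, hab]
  | cons u t =>
    cases u with
    | inr y =>
      have ht : ∀ y' t', t = Sum.inr y' :: t' → False := by
        intro y' t' htt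
        rw [Alt, htt, List.Chain', List.isChain_cons_cons] at hl
        simp at hl
      by_cases hby : b * y = 1
      · have h1 : nact b (Sum.inr y :: t) = t := by simp [nact, hby]
        rw [h1]
        have h2 : nact (a * b) (Sum.inr y :: t) =
            if a = 1 then t else Sum.inr a :: t := by
          simp [nact, mul_assoc, hby]
        rw [h2]
        cases t with
        | nil => simp [nact]
        | cons v t' =>
          cases v with
          | inr y' => exact absurd rfl (fun h => ht y' t' h)
          | inl x' => simp [nact]
      · have h1 : nact b (Sum.inr y :: t) = Sum.inr (b * y) :: t := by
          simp [nact, hby]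
        rw [h1]
        by_cases haby : a * (b * y) = 1 <;>
          simp [nact, mul_assoc, hby, haby]
    | inl x =>
      by_cases hb : b = 1
      · subst hb; rw [mul_one]; simp [nact]
      · have h1 : nact b (Sum.inl x :: t) = Sum.inr b :: Sum.inl x :: t := by
          simp [nact, hb]
        rw [h1]
        by_cases hab : a * b = 1 <;> simp [nact, hb, hab]

theorem mact_alt (a : M) (l : List (M ⊕ N)) (hl : Alt l) : Alt (mact a l) := by
  cases l with
  | nil =>
    by_cases ha : a = 1 <;> simp [mact, ha, Alt, List.Chain']
  | cons u t =>
    cases u with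
    | inl x =>
      rw [Alt, List.Chain', List.isChain_cons] at hl
      by_cases hax : a * x = 1
      · simpa [mact, hax, Alt, List.Chain'] using hl.2
      · rw [Alt] at *
        simp only [mact, hax, if_neg, not_false_iff]
        rw [List.Chain', List.isChain_cons] at *
        exact ⟨by simpa using hl.1, hl.2⟩
    | inr y =>
      by_cases ha : a = 1
      · simpa [mact, ha, Alt]
      · rw [Alt] at *
        simp only [mact, ha, if_neg, not_false_iff]
        rw [List.Chain', List.isChain_cons]
        exact ⟨by simp, hl⟩

theorem nact_alt (b : N) (l : List (M ⊕ N)) (hl : Alt l) : Alt (nact b l) := by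
  cases l with
  | nil =>
    by_cases hb : b = 1 <;> simp [nact, hb, Alt, List.Chain']
  | cons u t =>
    cases u with
    | inr y =>
      rw [Alt, List.Chain', List.isChain_cons] at hl
      by_cases hby : b * y = 1
      · simpa [nact, hby, Alt, List.Chain'] using hl.2
      · rw [Alt] at *
        simp only [nact, hby, if_neg, not_false_iff]
        rw [List.Chain', List.isChain_cons] at *
        exact ⟨by simpa using hl.1, hl.2⟩
    | inl x =>
      by_cases hb : b = 1
      · simpa [nact, hb, Alt]
      · rw [Alt] at *
        simp only [nact, hb, if_neg, not_false_iff]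
        rw [List.Chain', List.isChain_cons]
        exact ⟨by simp, hl⟩

theorem mact_noOne (a : M) (l : List (M ⊕ N)) (hl : NoOne l) : NoOne (mact a l) := by
  cases l with
  | nil =>
    by_cases ha : a = 1 <;> simp [mact, ha, NoOne] <;> simp_all [NoOne]
  | cons u t =>
    have htl : NoOne t := fun v hv => hl v (List.mem_cons_of_mem _ hv)
    cases u with
    | inl x =>
      by_cases hax : a * x = 1
      · simpa [mact, hax]
      · simp only [mact, hax, if_neg, not_false_iff]
        intro v hv
        rcases List.mem_cons.mp hv with rfl | hv
        · exact ⟨by simpa using hax, by simp⟩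
        · exact htl v hv
    | inr y =>
      by_cases ha : a = 1
      · simpa [mact, ha]
      · simp only [mact, ha, if_neg, not_false_iff]
        intro v hv
        rcases List.mem_cons.mp hv with rfl | hv
        · exact ⟨by simpa using ha, by simp⟩
        · exact hl v hv

theorem nact_noOne (b : N) (l : List (M ⊕ N)) (hl : NoOne l) : NoOne (nact b l) := by
  cases l with
  | nil =>
    by_cases hb : b = 1 <;> simp [nact, hb, NoOne] <;> simp_all [NoOne]
  | cons u t =>
    have htl : NoOne t := fun v hv => hl v (List.mem_cons_of_mem _ hv)
    cases u with
    | inr y =>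
      by_cases hby : b * y = 1
      · simpa [nact, hby]
      · simp only [nact, hby, if_neg, not_false_iff]
        intro v hv
        rcases List.mem_cons.mp hv with rfl | hv
        · exact ⟨by simp, by simpa using hby⟩
        · exact htl v hv
    | inl x =>
      by_cases hb : b = 1
      · simpa [nact, hb]
      · simp only [nact, hb, if_neg, not_false_iff]
        intro v hv
        rcases List.mem_cons.mp hv with rfl | hv
        · exact ⟨by simp, by simpa using hb⟩
        · exact hl v hv

/-- The set of good words. -/
def GoodWord (M N : Type*) [Monoid M] [Monoid N] :=
  {l : List (M ⊕ N) // Alt l ∧ NoOne l}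

/-- The action of `M` as a monoid hom into endofunctions on good words. -/
noncomputable def mEnd : M →* Function.End (GoodWord M N) where
  toFun a := fun s => ⟨mact a s.1, mact_alt a s.1 s.2.1, mact_noOne a s.1 s.2.2⟩
  map_one' := funext fun s => Subtype.ext (mact_one s.1 s.2.2)
  map_mul' a b := funext fun s => Subtype.ext (mact_mul a b s.1 s.2.1)

/-- The action of `N` as a monoid hom into endofunctions on good words. -/
noncomputable def nEnd : N →* Function.End (GoodWord M N) where
  toFun b := fun s => ⟨nact b s.1, nact_alt b s.1 s.2.1, nact_noOne b s.1 s.2.2⟩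
  map_one' := funext fun s => Subtype.ext (nact_one s.1 s.2.2)
  map_mul' a b := funext fun s => Subtype.ext (nact_mul a b s.1 s.2.1)

@[simp] theorem mEnd_apply (a : M) (s : GoodWord M N) :
    ((mEnd a : Function.End (GoodWord M N)) s).1 = mact a s.1 := rfl

@[simp] theorem nEnd_apply (b : N) (s : GoodWord M N) :
    ((nEnd b : Function.End (GoodWord M N)) s).1 = nact b s.1 := rfl

/-- Invariant: the word ends with `inl (c * m), inr n`. -/
def Qp (m : M) (n : N) (l : List (M ⊕ N)) : Prop :=
  ∃ t c, l = t ++ [Sum.inl (c * m), Sum.inr n]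

theorem mact_Qp {m : M} {n : N} (hm1 : ¬∃ b : M, b * m = 1) (a : M)
    (l : List (M ⊕ N)) (h : Qp m n l) : Qp m n (mact a l) := by
  classical
  obtain ⟨t, c, rfl⟩ := h
  cases t with
  | nil =>
    have hne : a * (c * m) ≠ 1 := fun h1 => hm1 ⟨a * c, by rwa [mul_assoc]⟩
    refine ⟨[], a * c, ?_⟩
    simp [mact, hne, mul_assoc]
  | cons u t' =>
    cases u with
    | inl x =>
      by_cases hax : a * x = 1
      · exact ⟨t', c, by simp [mact, hax]⟩
      · exact ⟨Sum.inl (a * x) :: t', c, by simp [mact, hax]⟩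
    | inr y =>
      by_cases ha : a = 1
      · exact ⟨Sum.inr y :: t', c, by simp [mact, ha]⟩
      · exact ⟨Sum.inl a :: Sum.inr y :: t', c, by simp [mact, ha]⟩

theorem nact_Qp {m : M} {n : N} (b : N)
    (l : List (M ⊕ N)) (h : Qp m n l) : Qp m n (nact b l) := by
  classical
  obtain ⟨t, c, rfl⟩ := h
  cases t with
  | nil =>
    by_cases hb : b = 1
    · exact ⟨[], c, by simp [nact, hb]⟩
    · exact ⟨[Sum.inr b], c, by simp [nact, hb]⟩
  | cons u t' =>
    cases u with
    | inr y =>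
      by_cases hby : b * y = 1
      · exact ⟨t', c, by simp [nact, hby]⟩
      · exact ⟨Sum.inr (b * y) :: t', c, by simp [nact, hby]⟩
    | inl x =>
      by_cases hb : b = 1
      · exact ⟨Sum.inl x :: t', c, by simp [nact, hb]⟩
      · exact ⟨Sum.inr b :: Sum.inl x :: t', c, by simp [nact, hb]⟩

end FPNR

open FPNR in
theorem free_product_not_regular (M N : Type*) [Monoid M] [Monoid N]
    (m : M) (n : N)
    (hm : (¬∃ b : M, b * m = 1) ∧ (¬∃ b : M, m * b = 1))
    (hn : (¬∃ b : N, b * n = 1) ∧ (¬∃ b : N, n * b = 1)) :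
    ¬∃ w : Monoid.Coprod M N,
      (Monoid.Coprod.inl m * Monoid.Coprod.inr n) * w *
        (Monoid.Coprod.inl m * Monoid.Coprod.inr n) =
      Monoid.Coprod.inl m * Monoid.Coprod.inr n := by
  classical
  rintro ⟨w, hw⟩
  have hmne : m ≠ 1 := fun h => hm.2 ⟨1, by rw [h, one_mul]⟩
  have hnne : n ≠ 1 := fun h => hn.2 ⟨1, by rw [h, one_mul]⟩
  set F : Monoid.Coprod M N →* Function.End (GoodWord M N) :=
    Monoid.Coprod.lift mEnd nEnd with hF
  have hFx : F (Monoid.Coprod.inl m * Monoid.Coprod.inr n) = mEnd m * nEnd n := by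
    rw [map_mul, hF, Monoid.Coprod.lift_apply_inl, Monoid.Coprod.lift_apply_inr]
  let e : GoodWord M N := ⟨[], by simp [Alt, List.Chain'], by simp [NoOne]⟩
  -- evaluate the hypothesized equation at the empty word
  have hw2 := congrArg (fun p => (F p) e) hw
  simp only [map_mul, hFx] at hw2
  -- compute F x e
  have hxe : ((mEnd m * nEnd n : Function.End (GoodWord M N)) e).1 =
      [Sum.inl m, Sum.inr n] := by
    show (mact m (nact n e.1) : List (M ⊕ N)) = _
    have h1 : (nact n e.1 : List (M ⊕ N)) = [Sum.inr n] := by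
      show nact n [] = _
      simp [nact, hnne]
    rw [h1]
    simp [mact, hmne]
  -- the invariant holds for F p s whenever it holds for s
  have hq : ∀ p : Monoid.Coprod M N, ∀ s : GoodWord M N,
      Qp m n s.1 → Qp m n ((F p) s).1 := by
    intro p
    induction p using Monoid.Coprod.induction_on with
    | inl a =>
      intro s hs
      rw [hF, Monoid.Coprod.lift_apply_inl]
      exact mact_Qp hm.1 a s.1 hs
    | inr b =>
      intro s hs
      rw [hF, Monoid.Coprod.lift_apply_inr]
      exact nact_Qp b s.1 hs
    | mul x y hx hy =>
      intro s hs
      rw [map_mul]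
      exact hx _ (hy s hs)
  -- let s be the result of acting by w on F x e
  set s : GoodWord M N := (F w) ((mEnd m * nEnd n : Function.End (GoodWord M N)) e)
    with hs
  have hqs : Qp m n s.1 := by
    refine hq w _ ?_
    rw [hxe]
    exact ⟨[], 1, by simp⟩
  obtain ⟨t, c, hsval⟩ := hqs
  -- hw2 : mEnd m (nEnd n s) = (mEnd m * nEnd n) e
  have hw3 : (mact m (nact n s.1) : List (M ⊕ N)) = [Sum.inl m, Sum.inr n] := by
    have := congrArg Subtype.val hw2
    rw [hxe] at this
    exact this
  -- now derive a contradiction by a length count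
  have hlen : (s.1 : List (M ⊕ N)).length ≥ 2 := by
    rw [hsval]; simp
  cases hhead : s.1 with
  | nil => rw [hhead] at hlen; simp at hlen
  | cons u r =>
    cases u with
    | inl x =>
      -- n is prepended, then m is prepended : length ≥ 4
      have h1 : (nact n s.1 : List (M ⊕ N)) = Sum.inr n :: s.1 := by
        rw [hhead]; simp [nact, hnne]
      have h2 : (mact m (nact n s.1) : List (M ⊕ N)) = Sum.inl m :: Sum.inr n :: s.1 := by
        rw [h1]; simp [mact, hmne]
      rw [h2] at hw3
      have : s.1.length = 0 := by
        have := congrArg List.length hw3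
        simpa using this
      omega
    | inr y =>
      -- head is inr y, so t ≠ [] and s has length ≥ 3
      have hny : n * y ≠ 1 := fun h1 => hn.2 ⟨y, h1⟩
      have h1 : (nact n s.1 : List (M ⊕ N)) = Sum.inr (n * y) :: r := by
        rw [hhead]; simp [nact, hny]
      have h2 : (mact m (nact n s.1) : List (M ⊕ N)) =
          Sum.inl m :: Sum.inr (n * y) :: r := by
        rw [h1]; simp [mact, hmne]
      rw [h2] at hw3
      have hr : r = [] := by
        have := List.tail_eq_of_cons_eq (List.tail_eq_of_cons_eq hw3)
        exact this
      -- then s.1 = [inr y], contradicting hsval (length ≥ 2)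
      rw [hr] at hhead
      rw [hhead] at hlen
      simp at hlen
end

section
/- Let M be a monoid, u left invertible with left inverse u', and e idempotent with u e u' idempotent (which holds since u'u = 1). If a ∈ M satisfies a R̃ e and u is invertible (uu' = u'u = 1), then ua R̃ ueu'. -/
theorem rtilde_left_mult_by_unit (M : Type*) [Monoid M]
    (u u' a e : M) (hu : u * u' = 1) (hu' : u' * u = 1)
    (he : e * e = e)
    (hae : ∀ f : M, f * f = f → (f * a = a ↔ f * e = e)) :
    ∀ f : M, f * f = f →
      (f * (u * a) = u * a ↔ f * (u * e * u') = u * e * u') := by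
  intro f hf
  have hg : (u' * f * u) * (u' * f * u) = u' * f * u := by
    have : (u' * f * u) * (u' * f * u) = u' * (f * ((u * u') * (f * u))) := by
      simp [mul_assoc]
    rw [this, hu, one_mul, ← mul_assoc f f u, hf, mul_assoc]
  have key := hae _ hg
  constructor
  · intro h
    have h1 : (u' * f * u) * a = a := by
      have := congrArg (fun x => u' * x) h
      simpa [mul_assoc, ← mul_assoc u' u, hu'] using this
    have h2 := key.mp h1
    have := congrArg (fun x => u * x * u') h2
    simpa [mul_assoc, ← mul_assoc u u', hu, hu'] using this
  · intro h
    have h2 : (u' * f * u) * e = e := by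
      have := congrArg (fun x => u' * x * u) h
      simpa [mul_assoc, ← mul_assoc u' u, hu, hu'] using this
    have h1 := key.mpr h2
    have := congrArg (fun x => u * x) h1
    simpa [mul_assoc, ← mul_assoc u u', hu] using this
end
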